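/- Let H be a numerical monoid, X a subset of H containing 0, and y a non-zero element of H. Define H_y := {0} ∪ (H ∩ Z_{≥y}) and H_y* := H_y \ {y}. Then y ∈ X if and only if H_y + X = H_y* + X. -/

import Mathlib

open Pointwise

/-- Let `H ⊆ ℕ` be a numerical monoid, `X ⊆ H` with `0 ∈ X`, and
`y ∈ H`, `y ≠ 0`. With `H_y = {0} ∪ (H ∩ [y, ∞))` and `H_y* = H_y \ {y}`, one has
`y ∈ X ↔ H_y + X = H_y* + X`. -/
theorem stmt9 (H : Set ℕ) (h0 : 0 ∈ H) (hadd : ∀ a ∈ H, ∀ b ∈ H, a + b ∈ H)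
    (hcof : Hᶜ.Finite) (X : Set ℕ) (hX0 : 0 ∈ X) (hXH : X ⊆ H)
    (y : ℕ) (hy : y ∈ H) (hy0 : y ≠ 0) :
    y ∈ X ↔
      ({0} ∪ (H ∩ Set.Ici y)) + X = (({0} ∪ (H ∩ Set.Ici y)) \ {y}) + X := by
  constructor
  · intro hyX
    apply Set.Subset.antisymm
    · rintro z hz
      rw [Set.mem_add] at hz
      obtain ⟨a, ha, x, hx, rfl⟩ := hz
      by_cases hay : a = y
      · rw [hay]
        by_cases hx0 : x = 0
        · rw [hx0]
          refine Set.mem_add.2 ⟨0, ⟨Or.inl rfl, ?_⟩, y, hyX, by ring⟩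
          simp [Ne.symm hy0]
        · refine Set.mem_add.2 ⟨y + x, ⟨Or.inr ⟨hadd y hy x (hXH hx), Set.mem_Ici.2 le_self_add⟩, ?_⟩,
            0, hX0, by ring⟩
          have : x ≠ 0 := hx0
          simp only [Set.mem_singleton_iff]
          omega
      · exact Set.mem_add.2 ⟨a, ⟨ha, hay⟩, x, hx, rfl⟩
    · exact Set.add_subset_add_right Set.diff_subset
  · intro heq
    have hy' : y ∈ ({0} ∪ (H ∩ Set.Ici y)) + X :=
      Set.mem_add.2 ⟨y, Or.inr ⟨hy, le_refl y⟩, 0, hX0, by ring⟩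
    rw [heq, Set.mem_add] at hy'
    obtain ⟨a, ⟨ha, hay⟩, x, hx, hax⟩ := hy'
    simp only [Set.mem_singleton_iff] at hay
    rcases ha with h1 | ⟨_, h2⟩
    · simp only [Set.mem_singleton_iff] at h1
      subst h1
      rw [zero_add] at hax
      exact hax ▸ hx
    · rw [Set.mem_Ici] at h2
      omega
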